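/- Fix μ ∈ (0,1) and ρ > 0, ρ ≠ 1. Let a := μρ and b := 1−μ. Define, for π ∈ ℝ, α(π) := π(ρ−1)+a+b, β(π) := √(α(π)² − 4aπ(ρ−1)) and N(π) := 2aπ(ρ−1) − (α(π)−β(π))(a+b). Then (as long as β(π) > 0) N''(π) = ((ρ−1)²/β(π)³)·(a+b)·4ab > 0, N(0) = 0 and N'(0) = 0; consequently N(π) > 0 for all π ∈ (0,1). -/

import Mathlib

theorem key11 (a b c : ℝ) (ha : 0 < a) (hb : 0 < b) (hc : c ≠ 0) :
    let β : ℝ → ℝ := fun π => Real.sqrt ((π*c + (b-a))^2 + 4*a*b)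
    let N : ℝ → ℝ := fun π => 2*a*π*c - ((π*c + a + b) - β π)*(a+b)
    (∀ π : ℝ, deriv (deriv N) π = c^2/(β π)^3 * (a+b) * (4*a*b) ∧ 0 < deriv (deriv N) π) ∧
    N 0 = 0 ∧ deriv N 0 = 0 ∧ ∀ π ∈ Set.Ioo (0:ℝ) 1, 0 < N π := by
  intro β N
  have hD : ∀ x : ℝ, 0 < (x*c + (b-a))^2 + 4*a*b := fun x => by positivity
  have hβpos : ∀ π, 0 < β π := fun π => Real.sqrt_pos.mpr (hD π)
  have hβne : ∀ π, β π ≠ 0 := fun π => (hβpos π).ne'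
  have hβsq : ∀ π, β π ^ 2 = (π*c + (b-a))^2 + 4*a*b :=
    fun π => Real.sq_sqrt (hD π).le
  have hβd : ∀ π, HasDerivAt β (c * (π*c + (b-a)) / β π) π := by
    intro π
    have h1 : HasDerivAt (fun x : ℝ => (x*c + (b-a))^2 + 4*a*b) (2*(π*c+(b-a))*c) π := by
      have h2 := ((((hasDerivAt_id π).mul_const c).add_const (b-a)).pow 2).add_const (4*a*b)
      refine h2.congr_deriv ?_
      simp only [id_eq]; push_cast; ring
    have h3 := (Real.hasDerivAt_sqrt (ne_of_gt (hD π))).comp π h1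
    refine h3.congr_deriv ?_
    show 1 / (2 * β π) * (2 * (π * c + (b - a)) * c) = _
    field_simp [hβne π]
  set g : ℝ → ℝ := fun π => 2*a*c - (c - c*(π*c+(b-a))/β π)*(a+b) with hg
  have hNd : ∀ π, HasDerivAt N (g π) π := by
    intro π
    have hlin : HasDerivAt (fun x : ℝ => x*c + a + b) (1*c) π :=
      (((hasDerivAt_id π).mul_const c).add_const a).add_const b
    have h1 : HasDerivAt (fun x : ℝ => 2*a*x*c) ((2*a*1)*c) π :=
      (((hasDerivAt_id π).const_mul (2*a)).mul_const c)
    have h2 := h1.sub ((hlin.sub (hβd π)).mul_const (a+b))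
    refine h2.congr_deriv ?_
    simp only [hg, id_eq]
    ring
  have hderivN : deriv N = g := funext fun π => (hNd π).deriv
  have hgd : ∀ π, HasDerivAt g (c^2/(β π)^3 * (a+b) * (4*a*b)) π := by
    intro π
    have hnum : HasDerivAt (fun x : ℝ => c*(x*c+(b-a))) (c*(1*c)) π :=
      (((hasDerivAt_id π).mul_const c).add_const (b-a)).const_mul c
    have hq := hnum.div (hβd π) (hβne π)
    have h2 := ((hasDerivAt_const π c).sub hq).mul_const (a+b)
    have h3 := (hasDerivAt_const π (2*a*c)).sub h2
    refine h3.congr_deriv ?_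
    have hb2 := hβsq π
    have h4ab : 4*a*b = β π ^ 2 - (π*c+(b-a))^2 := by rw [hb2]; ring
    rw [h4ab]
    field_simp
    ring
  have hdd : ∀ π, deriv (deriv N) π = c^2/(β π)^3 * (a+b) * (4*a*b) := by
    intro π; rw [hderivN]; exact (hgd π).deriv
  have hc2 : 0 < c^2 := lt_of_le_of_ne (sq_nonneg c) (Ne.symm (pow_ne_zero 2 hc))
  have hddpos : ∀ π, 0 < deriv (deriv N) π := by
    intro π
    rw [hdd π]
    have : 0 < (β π)^3 := by positivity
    positivity
  have hβ0 : β 0 = a + b := by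
    show Real.sqrt _ = _
    have : ((0:ℝ)*c + (b-a))^2 + 4*a*b = (a+b)^2 := by ring
    rw [this, Real.sqrt_sq (by linarith)]
  have hN0 : N 0 = 0 := by
    show 2*a*0*c - ((0*c + a + b) - β 0)*(a+b) = 0
    rw [hβ0]; ring
  have hdN0 : deriv N 0 = 0 := by
    rw [hderivN]
    show 2*a*c - (c - c*(0*c+(b-a))/β 0)*(a+b) = 0
    rw [hβ0]
    field_simp
    ring
  refine ⟨fun π => ⟨hdd π, hddpos π⟩, hN0, hdN0, ?_⟩
  intro π hπ
  have hgmono : StrictMono g := by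
    apply strictMono_of_deriv_pos
    intro x
    rw [(hgd x).deriv]
    have : 0 < (β x)^3 := by positivity
    positivity
  have hg0 : g 0 = 0 := by rw [← hderivN]; exact hdN0
  have hNmono : StrictMonoOn N (Set.Ici 0) := by
    apply strictMonoOn_of_deriv_pos (convex_Ici 0)
    · exact fun x _ => (hNd x).differentiableAt.continuousAt.continuousWithinAt
    · intro x hx
      rw [interior_Ici] at hx
      rw [hderivN]
      calc (0:ℝ) = g 0 := hg0.symm
        _ < g x := hgmono hx
  have := hNmono (Set.self_mem_Ici) (Set.mem_Ici.mpr hπ.1.le) hπ.1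
  rwa [hN0] at this

theorem stmt11 (μ ρ : ℝ) (hμ : μ ∈ Set.Ioo (0:ℝ) 1) (hρ : 0 < ρ) (hρ1 : ρ ≠ 1) :
    let a := μ * ρ
    let b := 1 - μ
    let α : ℝ → ℝ := fun π => π * (ρ - 1) + a + b
    let β : ℝ → ℝ := fun π => Real.sqrt ((α π)^2 - 4 * a * π * (ρ - 1))
    let N : ℝ → ℝ := fun π => 2 * a * π * (ρ - 1) - (α π - β π) * (a + b)
    (∀ π : ℝ, 0 < β π →
      deriv (deriv N) π = (ρ - 1)^2 / (β π)^3 * (a + b) * (4 * a * b) ∧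
      0 < deriv (deriv N) π) ∧
    N 0 = 0 ∧ deriv N 0 = 0 ∧ ∀ π ∈ Set.Ioo (0:ℝ) 1, 0 < N π := by
  intro a b α β N
  set c := ρ - 1 with hcdef
  have ha : 0 < a := mul_pos hμ.1 hρ
  have hb : 0 < b := by simp only [b]; linarith [hμ.2]
  have hc : c ≠ 0 := sub_ne_zero.mpr hρ1
  have hβ : β = fun π => Real.sqrt ((π*c + (b-a))^2 + 4*a*b) := by
    funext π
    show Real.sqrt ((π * c + a + b)^2 - 4*a*π*c) = _
    congr 1
    ring
  have hN : N = fun π => 2*a*π*c - ((π*c + a + b) - β π)*(a+b) := by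
    funext π
    rfl
  rw [hN, hβ]
  obtain ⟨h1, h2, h3, h4⟩ := key11 a b c ha hb hc
  exact ⟨fun π _ => h1 π, h2, h3, h4⟩
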